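/- For every start time s ≥ e_1 and every k with 1 ≤ k ≤ m, the recursively defined departure time admits the closed form B_k(s) = max( s + Σ_{p<k} t_p , max_{2≤m'≤k} ( e_{m'} + Σ_{m'≤p<k} t_p ) ). -/

import Mathlib

/-- Departure times along a route, 0-indexed: Lean index `k` is the paper's
location `k+1`, `t k` is the travel time from location `k` to `k+1`, `e k` is
the time-window start of location `k`.  `depTime e t s 0 = s` and
`depTime e t s (k+1) = max (e (k+1)) (depTime e t s k + t k)`. -/
noncomputable def depTime (e t : ℕ → ℝ) (s : ℝ) : ℕ → ℝ
  | 0 => s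
  | k + 1 => max (e (k + 1)) (depTime e t s k + t k)

/-- for every start time `s ≥ e_1` and every location `k` of the
route (paper locations `1 ≤ k ≤ m` are Lean indices `k < m`), the recursively
defined departure time admits the closed form
`B_k(s) = max (s + Σ_{p<k} t_p) (max_{2 ≤ m' ≤ k} (e_{m'} + Σ_{m'≤p<k} t_p))`;
the element `0` of the index set contributes the first term and the elements
`j ∈ Icc 1 k` (paper `m' = j+1 ∈ [2, k+1]`) contribute the inner maximum. -/
theorem stmt_0 (m : ℕ) (e t : ℕ → ℝ) (ht : ∀ p, 0 ≤ t p)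
    (s : ℝ) (hs : e 0 ≤ s) (k : ℕ) (hk : k < m) :
    depTime e t s k =
      (insert 0 (Finset.Icc 1 k)).sup' (by simp) fun j =>
        (if j = 0 then s else e j) + ∑ p ∈ Finset.Ico j k, t p := by
  clear hk
  induction k with
  | zero => simp [depTime]
  | succ k ih =>
    have hIcc : Finset.Icc 1 (k + 1) = insert (k + 1) (Finset.Icc 1 k) := by
      ext x; simp [Finset.mem_Icc]; omega
    have hset : insert 0 (Finset.Icc 1 (k + 1))
        = insert (k + 1) (insert 0 (Finset.Icc 1 k)) := by
      rw [hIcc, Finset.insert_comm]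
    rw [Finset.sup'_congr _ hset (fun x _ => rfl), Finset.sup'_insert (H := by simp)]
    have h1 : (if k + 1 = 0 then s else e (k + 1))
        + ∑ p ∈ Finset.Ico (k + 1) (k + 1), t p = e (k + 1) := by simp
    rw [h1]
    have h2 : ((insert 0 (Finset.Icc 1 k)).sup' (by simp) fun j =>
        (if j = 0 then s else e j) + ∑ p ∈ Finset.Ico j (k + 1), t p)
        = ((insert 0 (Finset.Icc 1 k)).sup' (by simp) fun j =>
        ((if j = 0 then s else e j) + ∑ p ∈ Finset.Ico j k, t p) + t k) := by
      apply Finset.sup'_congr _ rfl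
      intro j hj
      have hjk : j ≤ k := by
        simp only [Finset.mem_insert, Finset.mem_Icc] at hj
        omega
      rw [Finset.sum_Ico_succ_top hjk, add_assoc]
    rw [h2, ← Finset.sup'_add, ← ih]
    simp [depTime, max_comm]
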